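/- The set system B = {{a,b},{a,c,d},{a,c,e},{a,b,d,e},{b,c,d,e}} on N = {a,b,c,d,e} is min-balanced on N (with coefficients 1/4,1/4,1/4,1/4,1/2 respectively) and is irreducible. -/

import Mathlib

open Finset

variable {ι : Type*} [DecidableEq ι]

/-- The 0/1 indicator vector of a finite set `S`. -/
def chi (S : Finset ι) : ι → ℝ := fun i => if i ∈ S then 1 else 0

/-- `B` is a min-balanced system: there are strictly positive coefficients expressing the
indicator of the carrier `⋃B` as a combination of the indicators of members of `B`, and
those indicator vectors are linearly independent. -/
def MinBalanced (B : Finset (Finset ι)) : Prop :=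
  B.Nonempty ∧
  (∃ lam : Finset ι → ℝ, (∀ S ∈ B, 0 < lam S) ∧
      ∀ i, chi (B.sup id) i = ∑ S ∈ B, lam S * chi S i) ∧
  LinearIndependent ℝ (fun S : {x // x ∈ B} => chi (S.1 : Finset ι))

/-- `v` lies in the conic hull of the indicator vectors of the members of `B`. -/
def inConicHull (B : Finset (Finset ι)) (v : ι → ℝ) : Prop :=
  ∃ lam : Finset ι → ℝ, (∀ S ∈ B, 0 ≤ lam S) ∧
    ∀ i, v i = ∑ S ∈ B, lam S * chi S i

/-- A min-balanced system `B` is reducible if there are `A ⊊ ⋃B` and `B₀ ∈ B` with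
`B₀ ⊊ A` such that `χ_A` is in the conic hull of the indicators of `{S ∈ B : S ⊊ A}`
and `χ_{⋃B}` is in the conic hull of the indicators of `{A} ∪ (B \ {B₀})`. -/
def Reducible (B : Finset (Finset ι)) : Prop :=
  ∃ A : Finset ι, A ⊂ B.sup id ∧
    ∃ B₀ ∈ B.filter (fun S => S ⊂ A),
      inConicHull (B.filter (fun S => S ⊂ A)) (chi A) ∧
      inConicHull (insert A (B.erase B₀)) (chi (B.sup id))

/-- The concrete system on `N = {a,b,c,d,e}` (encoded as `Fin 5`). -/
def B19 : Finset (Finset (Fin 5)) :=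
  {{0,1}, {0,2,3}, {0,2,4}, {0,1,3,4}, {1,2,3,4}}

/-- The witnessing coefficients: 1/2 on `{b,c,d,e}`, 1/4 on the other members. -/
noncomputable def lam19 : Finset (Fin 5) → ℝ :=
  fun S => if S = ({1,2,3,4} : Finset (Fin 5)) then 1/2 else 1/4


lemma sumB19 {M : Type*} [AddCommMonoid M] (f : Finset (Fin 5) → M) :
    ∑ S ∈ B19, f S = f {0,1} + (f {0,2,3} + (f {0,2,4} + (f {0,1,3,4} + f {1,2,3,4}))) := by
  rw [show B19 = insert {0,1} (insert {0,2,3} (insert {0,2,4} (insert {0,1,3,4} {{1,2,3,4}}))) from rfl]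
  rw [Finset.sum_insert (by decide), Finset.sum_insert (by decide),
      Finset.sum_insert (by decide), Finset.sum_insert (by decide), Finset.sum_singleton]

lemma supB19 : B19.sup id = Finset.univ := by decide

lemma lam19pos : ∀ S ∈ B19, 0 < lam19 S := by
  intro S _
  unfold lam19
  split <;> norm_num

lemma combo19 : ∀ i, chi (Finset.univ : Finset (Fin 5)) i = ∑ S ∈ B19, lam19 S * chi S i := by
  intro i
  rw [sumB19]
  fin_cases i <;> simp (config := { decide := true }) only [lam19, chi] <;> norm_num

def F19 : Fin 5 → (Fin 5 → ℝ) :=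
  ![chi {0,1}, chi {0,2,3}, chi {0,2,4}, chi {0,1,3,4}, chi {1,2,3,4}]

lemma F19indep : LinearIndependent ℝ F19 := by
  rw [Fintype.linearIndependent_iff]
  intro g hg
  have h0 := congrFun hg 0
  have h1 := congrFun hg 1
  have h2 := congrFun hg 2
  have h3 := congrFun hg 3
  have h4 := congrFun hg 4
  simp [F19, chi, Fin.sum_univ_five, Matrix.vecHead, Matrix.vecTail] at h0 h1 h2 h3 h4
  have e1 : g 1 = 0 := by linarith
  have e2 : g 2 = 0 := by linarith
  have e4 : g 4 = 0 := by linarith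
  have e3 : g 3 = 0 := by linarith
  have e0 : g 0 = 0 := by linarith
  intro i
  fin_cases i <;> assumption

def pi19 : {x // x ∈ B19} → Fin 5 := fun S =>
  if S.1 = {0,1} then 0 else if S.1 = {0,2,3} then 1 else if S.1 = {0,2,4} then 2
  else if S.1 = {0,1,3,4} then 3 else 4

lemma pi19inj : Function.Injective pi19 := by decide

lemma indep19 : LinearIndependent ℝ (fun S : {x // x ∈ B19} => chi (S.1 : Finset (Fin 5))) := by
  have h : (fun S : {x // x ∈ B19} => chi (S.1 : Finset (Fin 5))) = F19 ∘ pi19 := by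
    funext S
    obtain ⟨S, hS⟩ := S
    fin_cases hS <;> rfl
  rw [h]
  exact F19indep.comp pi19 pi19inj

set_option linter.unnecessarySeqFocus false in
lemma notred19 : ¬ Reducible B19 := by
  rintro ⟨A, hAsub, B₀, hB₀, ⟨lam, hpos, heq⟩, -⟩
  obtain ⟨hb1, hb2⟩ := Finset.mem_filter.mp hB₀
  have H : ∀ i, chi A i = ∑ S ∈ B19, if S ⊂ A then lam S * chi S i else 0 := by
    intro i; rw [← Finset.sum_filter]; exact heq i
  have H0 := H 0; have H1 := H 1; have H2 := H 2; have H3 := H 3; have H4 := H 4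
  rw [sumB19] at H0 H1 H2 H3 H4
  clear H heq hpos hB₀
  fin_cases A <;>
    first
    | (revert hAsub; decide)
    | (fin_cases hb1 <;> revert hb2 <;> decide)
    | (simp (config := { decide := true }) only [chi, if_true, if_false] at H0 H1 H2 H3 H4 <;>
        (try norm_num at H0 H1 H2 H3 H4) <;> linarith)

theorem stmt19 :
    MinBalanced B19 ∧ B19.sup id = Finset.univ ∧
    (∀ S ∈ B19, 0 < lam19 S) ∧
    (∀ i, chi (Finset.univ : Finset (Fin 5)) i = ∑ S ∈ B19, lam19 S * chi S i) ∧
    ¬ Reducible B19 := by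
  refine ⟨⟨⟨{0,1}, by decide⟩, ⟨lam19, lam19pos, by rw [supB19]; exact combo19⟩, indep19⟩,
    supB19, lam19pos, combo19, notred19⟩
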